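/- Let f : [τ₀, ∞) → (0, ∞) be continuous, and suppose there exist positive constants E₀, C₀, b, p such that for all τ₀ ≤ τ₁ < τ₂ one has both f(τ₂) + b∫_{τ₁}^{τ₂} f(τ) dτ ≤ f(τ₁) + E₀ (τ₂ − τ₁) τ₁^{−p} and f(τ₂) + b∫_{τ₁}^{τ₂} f(τ) dτ ≤ f(τ₁) + C₀ (τ₂ − τ₁) f(τ₀). Then there exists a constant C depending only on E₀, C₀, b, p (and τ₀ ≥ 1) such that f(τ) ≤ C τ^{−p} (f(τ₀) + E₀) for all τ ≥ τ₀. -/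

import Mathlib

/-- A Grönwall-type decay lemma: a continuous positive function `f` on `[τ₀, ∞)`
(with `τ₀ ≥ 1`) satisfying, for all `τ₀ ≤ τ₁ < τ₂`, both
`f(τ₂) + b ∫_{τ₁}^{τ₂} f ≤ f(τ₁) + E₀ (τ₂ − τ₁) τ₁^{−p}` and
`f(τ₂) + b ∫_{τ₁}^{τ₂} f ≤ f(τ₁) + C₀ (τ₂ − τ₁) f(τ₀)`,
decays polynomially: there is a constant `C` (depending only on `E₀, C₀, b, p, τ₀`)
with `f(τ) ≤ C τ^{−p} (f(τ₀) + E₀)` for all `τ ≥ τ₀`. -/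
theorem gronwall_polynomial_decay
    (τ₀ E₀ C₀ b p : ℝ) (f : ℝ → ℝ)
    (hτ₀ : 1 ≤ τ₀) (hE₀ : 0 < E₀) (hC₀ : 0 < C₀) (hb : 0 < b) (hp : 0 < p)
    (hcont : ContinuousOn f (Set.Ici τ₀))
    (hpos : ∀ τ, τ₀ ≤ τ → 0 < f τ)
    (h1 : ∀ τ₁ τ₂, τ₀ ≤ τ₁ → τ₁ < τ₂ →
      f τ₂ + b * ∫ τ in τ₁..τ₂, f τ ≤ f τ₁ + E₀ * (τ₂ - τ₁) * τ₁ ^ (-p))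
    (h2 : ∀ τ₁ τ₂, τ₀ ≤ τ₁ → τ₁ < τ₂ →
      f τ₂ + b * ∫ τ in τ₁..τ₂, f τ ≤ f τ₁ + C₀ * (τ₂ - τ₁) * f τ₀) :
    ∃ C : ℝ, 0 < C ∧ ∀ τ, τ₀ ≤ τ → f τ ≤ C * τ ^ (-p) * (f τ₀ + E₀) := by
  clear h2 hC₀
  have hτ₀0 : (0:ℝ) < τ₀ := lt_of_lt_of_le one_pos hτ₀
  set L : ℝ := 2 / b with hL_def
  have hL : 0 < L := by positivity
  have hbL : b * L = 2 := by rw [hL_def]; field_simp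
  set A : ℝ := f τ₀ + E₀ with hA_def
  have hA : 0 < A := add_pos (hpos τ₀ le_rfl) hE₀
  clear_value L A
  have anti : ∀ a s : ℝ, 0 < a → a ≤ s → s ^ (-p) ≤ a ^ (-p) := fun a s ha has =>
    Real.rpow_le_rpow_of_nonpos ha has (neg_nonpos.mpr hp.le)
  have int_nonneg : ∀ τ₁ τ₂ : ℝ, τ₀ ≤ τ₁ → τ₁ ≤ τ₂ → 0 ≤ ∫ τ in τ₁..τ₂, f τ := by
    intro τ₁ τ₂ hτ₁ h12
    apply intervalIntegral.integral_nonneg h12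
    intro x hx
    exact (hpos x (le_trans hτ₁ hx.1)).le
  -- key step: one step of length L halves f up to an error term
  have key : ∀ τ : ℝ, τ₀ ≤ τ - L →
      f τ ≤ f (τ - L) / 2 + (3 * E₀ / b) * (τ - L) ^ (-p) := by
    intro τ hτL
    set a : ℝ := τ - L with ha_def
    have haτ : a < τ := by rw [ha_def]; linarith
    have haL : τ - a = L := by rw [ha_def]; ring
    have ha0 : 0 < a := lt_of_lt_of_le hτ₀0 hτL
    have hapow : 0 < a ^ (-p) := Real.rpow_pos_of_pos ha0 _
    have hfa : 0 < f a := hpos a hτL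
    set M : ℝ := f a + E₀ * L * a ^ (-p) with hM_def
    have hM0 : 0 < M := by
      have h' : 0 < E₀ * L * a ^ (-p) := by positivity
      rw [hM_def]; linarith
    have hbL0 : (0:ℝ) < b * L := by rw [hbL]; norm_num
    -- mean value: some point s in [a, τ] with small f s
    obtain ⟨s, hs, hfs⟩ : ∃ s ∈ Set.Icc a τ, f s * (b * L) ≤ M := by
      by_contra hcon
      push_neg at hcon
      have hint : IntervalIntegrable f MeasureTheory.volume a τ := by
        apply ContinuousOn.intervalIntegrable
        apply hcont.mono
        rw [Set.uIcc_of_le haτ.le]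
        intro x hx
        exact le_trans hτL hx.1
      have hmono' := intervalIntegral.integral_mono_on haτ.le
        (intervalIntegrable_const (c := M / (b * L))) hint
        (fun x hx => by
          rw [div_le_iff₀ hbL0]
          exact (hcon x hx).le)
      rw [intervalIntegral.integral_const, smul_eq_mul] at hmono'
      have hb2 : b * ((τ - a) * (M / (b * L))) = M := by
        rw [haL]
        field_simp
      have hb3 : M ≤ b * ∫ x in a..τ, f x := by
        rw [← hb2]
        exact mul_le_mul_of_nonneg_left hmono' hb.le
      have hstep := h1 a τ hτL haτ
      rw [haL] at hstep
      have hfτ : 0 < f τ := hpos τ (le_trans hτL haτ.le)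
      have hMeq : f a + E₀ * L * a ^ (-p) = M := hM_def.symm
      linarith
    have hfs' : f s ≤ M / 2 := by
      rw [hbL] at hfs
      linarith
    have hLb : E₀ * L = 2 * E₀ / b := by rw [hL_def]; ring
    rcases eq_or_lt_of_le hs.2 with heq | hlt
    · -- s = τ
      rw [heq] at hfs'
      have hMe : M / 2 = f a / 2 + (E₀ / b) * a ^ (-p) := by
        rw [hM_def, hLb]; ring
      have hdiff : (3 * E₀ / b) * a ^ (-p) - (E₀ / b) * a ^ (-p)
          = (2 * E₀ / b) * a ^ (-p) := by ring
      have hdp : 0 ≤ (2 * E₀ / b) * a ^ (-p) := by positivity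
      rw [hMe] at hfs'
      linarith
    · -- s < τ
      have hs0 : τ₀ ≤ s := le_trans hτL hs.1
      have hstep := h1 s τ hs0 hlt
      have hint := int_nonneg s τ hs0 hlt.le
      have hbint : 0 ≤ b * ∫ x in s..τ, f x := mul_nonneg hb.le hint
      have hfτs : f τ ≤ f s + E₀ * (τ - s) * s ^ (-p) := by linarith
      have hss : s ^ (-p) ≤ a ^ (-p) := anti a s ha0 hs.1
      have hs0' : 0 < s := lt_of_lt_of_le hτ₀0 hs0
      have h0s : 0 < s ^ (-p) := Real.rpow_pos_of_pos hs0' _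
      have hτs : τ - s ≤ L := by
        have := hs.1
        rw [ha_def] at this
        linarith
      have hmul1 : E₀ * (τ - s) ≤ E₀ * L := mul_le_mul_of_nonneg_left hτs hE₀.le
      have hmul2 : E₀ * (τ - s) * s ^ (-p) ≤ E₀ * L * s ^ (-p) :=
        mul_le_mul_of_nonneg_right hmul1 h0s.le
      have hmul3 : E₀ * L * s ^ (-p) ≤ E₀ * L * a ^ (-p) :=
        mul_le_mul_of_nonneg_left hss (by positivity)
      have hMe : M / 2 + E₀ * L * a ^ (-p) = f a / 2 + (3 * E₀ / b) * a ^ (-p) := by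
        rw [hM_def, hLb]; ring
      linarith
  -- the threshold and constant
  set θ : ℝ := ((3:ℝ)/4) ^ (p⁻¹) with hθ_def
  have hθ0 : 0 < θ := Real.rpow_pos_of_pos (by norm_num) _
  have hθ1 : θ < 1 := Real.rpow_lt_one (by norm_num) (by norm_num) (by positivity)
  have hθp : θ ^ (-p) = 4/3 := by
    rw [hθ_def, ← Real.rpow_mul (by norm_num : (0:ℝ) ≤ 3/4)]
    have hpp : p⁻¹ * (-p) = -1 := by field_simp
    rw [hpp, Real.rpow_neg_one]
    norm_num
  set T : ℝ := max (τ₀ + L) (L / (1 - θ)) with hT_def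
  have hT1 : τ₀ + L ≤ T := le_max_left _ _
  have hT2 : L / (1 - θ) ≤ T := le_max_right _ _
  have hT0 : 0 < T := lt_of_lt_of_le (by linarith) hT1
  have hTτ₀ : τ₀ ≤ T := by linarith
  set C : ℝ := max ((1 + T) * T ^ p) (12 / b) with hC_def
  have hC2 : 12 / b ≤ C := le_max_right _ _
  have hC1 : (1 + T) * T ^ p ≤ C := le_max_left _ _
  have hC0 : 0 < C := lt_of_lt_of_le (by positivity) hC2
  clear_value θ T C
  refine ⟨C, hC0, ?_⟩
  -- main induction
  have claim : ∀ n : ℕ, ∀ τ, τ₀ ≤ τ → τ ≤ T + n * L → f τ ≤ C * τ ^ (-p) * A := by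
    intro n
    induction n with
    | zero =>
      intro τ hτ hτT
      simp only [Nat.cast_zero, zero_mul, add_zero] at hτT
      have hτ1 : (1:ℝ) ≤ τ := le_trans hτ₀ hτ
      have hτpos : 0 < τ := lt_of_lt_of_le one_pos hτ1
      have hX : 0 < τ ^ (-p) := Real.rpow_pos_of_pos hτpos _
      have hbound : f τ ≤ f τ₀ + E₀ * T := by
        rcases eq_or_lt_of_le hτ with heq | hlt
        · rw [← heq]
          have : 0 < E₀ * T := mul_pos hE₀ hT0
          linarith
        · have hstep := h1 τ₀ τ le_rfl hlt
          have hint := int_nonneg τ₀ τ le_rfl hlt.le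
          have hbint : 0 ≤ b * ∫ x in τ₀..τ, f x := mul_nonneg hb.le hint
          have hsmall : τ₀ ^ (-p) ≤ 1 :=
            Real.rpow_le_one_of_one_le_of_nonpos hτ₀ (neg_nonpos.mpr hp.le)
          have hd1 : E₀ * (τ - τ₀) * τ₀ ^ (-p) ≤ E₀ * (τ - τ₀) * 1 :=
            mul_le_mul_of_nonneg_left hsmall
              (mul_nonneg hE₀.le (by linarith))
          have hd2 : E₀ * (τ - τ₀) ≤ E₀ * T :=
            mul_le_mul_of_nonneg_left (by linarith) hE₀.le
          linarith
      have hfA : f τ₀ + E₀ * T ≤ (1 + T) * A := by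
        have hfτ₀ := hpos τ₀ le_rfl
        have hm : 0 ≤ f τ₀ * T := mul_nonneg hfτ₀.le hT0.le
        rw [hA_def]
        nlinarith
      have htp : 1 ≤ T ^ p * τ ^ (-p) := by
        have ha1 : T ^ (-p) ≤ τ ^ (-p) := anti τ T hτpos hτT
        have ha2 : T ^ p * T ^ (-p) = 1 := by
          rw [← Real.rpow_add hT0]
          simp
        have ha3 : 0 < T ^ p := Real.rpow_pos_of_pos hT0 _
        have ha4 := mul_le_mul_of_nonneg_left ha1 ha3.le
        rw [ha2] at ha4
        exact ha4
      calc f τ ≤ (1 + T) * A := le_trans hbound hfA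
        _ = (1 + T) * A * 1 := by ring
        _ ≤ (1 + T) * A * (T ^ p * τ ^ (-p)) :=
            mul_le_mul_of_nonneg_left htp (mul_nonneg (by linarith) hA.le)
        _ = ((1 + T) * T ^ p) * τ ^ (-p) * A := by ring
        _ ≤ C * τ ^ (-p) * A := by
            have := mul_le_mul_of_nonneg_right
              (mul_le_mul_of_nonneg_right hC1 hX.le) hA.le
            linarith
    | succ n ih =>
      intro τ hτ hτT
      by_cases hcase : τ ≤ T + n * L
      · exact ih τ hτ hcase
      push_neg at hcase
      have hnL : (0:ℝ) ≤ n * L := by positivity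
      have hτT' : T ≤ τ := by linarith
      have hτ₀L : τ₀ ≤ τ - L := by linarith
      have hτpos : 0 < τ := lt_of_lt_of_le hT0 hτT'
      have hτLn : τ - L ≤ T + n * L := by
        push_cast at hτT
        linarith
      have hkey := key τ hτ₀L
      have hih := ih (τ - L) hτ₀L hτLn
      -- ratio bound : (τ - L)^{-p} ≤ (4/3) τ^{-p}
      have hθτ : θ * τ ≤ τ - L := by
        rw [div_le_iff₀ (by linarith)] at hT2
        nlinarith [mul_nonneg (by linarith : (0:ℝ) ≤ 1 - θ) (by linarith : (0:ℝ) ≤ τ - T)]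
      have hθτ0 : 0 < θ * τ := by positivity
      have hratio : (τ - L) ^ (-p) ≤ (4/3) * τ ^ (-p) := by
        have h1' := anti (θ * τ) (τ - L) hθτ0 hθτ
        rw [Real.mul_rpow hθ0.le hτpos.le, hθp] at h1'
        exact h1'
      have hY0 : 0 < (τ - L) ^ (-p) := Real.rpow_pos_of_pos (by linarith) _
      have hX0 : 0 < τ ^ (-p) := Real.rpow_pos_of_pos hτpos _
      have hEA : E₀ ≤ A := by
        have := hpos τ₀ le_rfl
        rw [hA_def]; linarith
      have hfL0 : 0 < f (τ - L) := hpos _ hτ₀L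
      -- combine
      have e2 : C * (τ - L) ^ (-p) * A ≤ C * ((4/3) * τ ^ (-p)) * A :=
        mul_le_mul_of_nonneg_right (mul_le_mul_of_nonneg_left hratio hC0.le) hA.le
      have e3 : (3 * E₀ / b) * (τ - L) ^ (-p) ≤ (3 * E₀ / b) * ((4/3) * τ ^ (-p)) :=
        mul_le_mul_of_nonneg_left hratio (by positivity)
      have e4 : (3 * E₀ / b) * ((4/3) * τ ^ (-p)) = (4 / b) * E₀ * τ ^ (-p) := by
        ring
      have h43 : 4 / b ≤ C / 3 := by
        rw [div_le_div_iff₀ hb (by norm_num : (0:ℝ) < 3)]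
        rw [div_le_iff₀ hb] at hC2
        linarith
      have e5 : (4 / b) * E₀ * τ ^ (-p) ≤ (C / 3) * A * τ ^ (-p) := by
        have h5 : (4 / b) * E₀ ≤ (C / 3) * A :=
          mul_le_mul h43 hEA hE₀.le (by positivity)
        exact mul_le_mul_of_nonneg_right h5 hX0.le
      linarith
  intro τ hτ
  obtain ⟨n, hn⟩ := exists_nat_ge ((τ - T) / L)
  have hτn : τ ≤ T + n * L := by
    rw [div_le_iff₀ hL] at hn
    linarith
  exact claim n τ hτ hτn
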